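/- Let k be a field and R a commutative noetherian integral domain that is a k-algebra, and let N be a finitely generated torsion-free R-module. If R (as a module over itself) degenerates to N, then N is isomorphic to R as an R-module. -/

import Mathlib

open TensorProduct

noncomputable section

/-- `M` degenerates to `N` (Yoshino, Definition 2.1): there are a discrete valuation ring
`(V, tV, k)` which is a `k`-algebra (with residue field `k`) and a finitely generated
`R ⊗_k V`-module `Q` such that (1) `Q` is flat as a `V`-module, (2) `Q/tQ ≅ N` as
`R`-modules, and (3) `Q[1/t] ≅ M ⊗_k V[1/t]` as `R ⊗_k V[1/t]`-modules; the last condition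
is expressed by an `R ⊗_k V`-linear map `M ⊗_k V → Q` (where `M ⊗_k V` is the base change
`(R ⊗_k V) ⊗_R M`) whose kernel and cokernel are annihilated by powers of `t`, i.e. which
becomes an isomorphism after inverting `t`. -/
def Degenerates (k : Type) [Field k] (R : Type) [CommRing R] [Algebra k R]
    (M : Type) [AddCommGroup M] [Module R M]
    (N : Type) [AddCommGroup N] [Module R N] : Prop :=
  ∃ (V : Type) (_ : CommRing V) (_ : IsDomain V) (_ : IsDiscreteValuationRing V)
    (_ : Algebra k V) (t : V),
    Irreducible t ∧
    Function.Bijective (algebraMap k (V ⧸ IsLocalRing.maximalIdeal V)) ∧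
    ∃ (Q : Type) (_ : AddCommGroup Q) (_ : Module (R ⊗[k] V) Q),
      Module.Finite (R ⊗[k] V) Q ∧
      (letI : Module V Q := Module.compHom Q
         (Algebra.TensorProduct.includeRight : V →ₐ[k] R ⊗[k] V).toRingHom
       Module.Flat V Q) ∧
      (letI : Module R (Q ⧸ (Ideal.span {((1:R) ⊗ₜ[k] t : R ⊗[k] V)} •
          (⊤ : Submodule (R ⊗[k] V) Q))) := Module.compHom _ (algebraMap R (R ⊗[k] V))
       Nonempty ((Q ⧸ (Ideal.span {((1:R) ⊗ₜ[k] t : R ⊗[k] V)} •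
          (⊤ : Submodule (R ⊗[k] V) Q))) ≃ₗ[R] N)) ∧
      ∃ ξ : ((R ⊗[k] V) ⊗[R] M) →ₗ[R ⊗[k] V] Q,
        (∀ x ∈ LinearMap.ker ξ, ∃ n : ℕ, ((1:R) ⊗ₜ[k] t : R ⊗[k] V) ^ n • x = 0) ∧
        (∀ q : Q, ∃ n : ℕ, ((1:R) ⊗ₜ[k] t : R ⊗[k] V) ^ n • q ∈ LinearMap.range ξ)

lemma yoshino_core {R S : Type} [CommRing R] [IsDomain R] [CommRing S] [Algebra R S]
    (τ : S) (hτ : ∀ s : S, τ * s = 0 → s = 0)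
    (hsur : ∀ s : S, ∃ (r : R) (z : S), s = algebraMap R S r + τ * z)
    (hinjR : ∀ r : R, (∃ z : S, algebraMap R S r = τ * z) → r = 0)
    {Q : Type} [AddCommGroup Q] [Module S Q]
    (hQtf : ∀ (r : R) (q : Q), r ≠ 0 → (∃ q', algebraMap R S r • q = τ • q') →
      ∃ q', q = τ • q')
    (ψ : Q → S)
    (hψa : ∀ q q' : Q, ψ (q + q') = ψ q + ψ q')
    (hψs : ∀ (s : S) (q : Q), ψ (s • q) = s * ψ q)
    (hψi : Function.Injective ψ)
    (b : ℕ) (hb : ∀ s : S, ∃ q : Q, ψ q = τ ^ b * s) :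
    ∃ q₀ : Q,
      (∀ q : Q, ∃ (r : R) (q' : Q), q = algebraMap R S r • q₀ + τ • q') ∧
      (∀ r : R, (∃ q' : Q, algebraMap R S r • q₀ = τ • q') → r = 0) := by
  classical
  have hτpow : ∀ (n : ℕ) (s : S), τ ^ n * s = 0 → s = 0 := by
    intro n
    induction n with
    | zero => intro s h; simpa using h
    | succ n ih =>
      intro s h
      have h' : τ ^ n * (τ * s) = 0 := by rw [← h]; ring
      exact hτ s (ih _ h')
  have hcan : ∀ (n : ℕ) (a c : S), τ ^ n * a = τ ^ n * c → a = c := by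
    intro n a c h
    have h0 : τ ^ n * (a - c) = 0 := by rw [mul_sub, h, sub_self]
    exact sub_eq_zero.mp (hτpow n _ h0)
  have hone : ∀ z : S, (1 : S) ≠ τ * z := by
    intro z h
    exact one_ne_zero (hinjR 1 ⟨z, by rw [map_one, h]⟩)
  have hex : ∃ n : ℕ, ¬ (∀ q : Q, ∃ y, ψ q = τ ^ n * y) := by
    refine ⟨b + 1, fun hPb => ?_⟩
    obtain ⟨qb, hqb⟩ := hb 1
    obtain ⟨y, hy⟩ := hPb qb
    refine hone y (hcan b 1 (τ * y) ?_)
    linear_combination hy - hqb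
  have hcc_ne : Nat.find hex ≠ 0 := by
    intro h
    have h2 := Nat.find_spec hex
    rw [h] at h2
    exact h2 (fun q => ⟨ψ q, by simp⟩)
  set c := Nat.find hex - 1 with hcdef
  have hclt : c < Nat.find hex := Nat.sub_lt (Nat.pos_of_ne_zero hcc_ne) one_pos
  have hPc : ∀ q : Q, ∃ y, ψ q = τ ^ c * y := not_not.mp (Nat.find_min hex hclt)
  have hc1 : c + 1 = Nat.find hex := Nat.succ_pred_eq_of_pos (Nat.pos_of_ne_zero hcc_ne)
  have hPc1 : ¬ (∀ q : Q, ∃ y, ψ q = τ ^ (c + 1) * y) := by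
    rw [hc1]; exact Nat.find_spec hex
  have hcb : c ≤ b := by
    by_contra hlt
    push_neg at hlt
    obtain ⟨qb, hqb⟩ := hb 1
    obtain ⟨y, hy⟩ := hPc qb
    refine hone (τ ^ (c - b - 1) * y) (hcan b 1 _ ?_)
    have hcsplit : c = b + 1 + (c - b - 1) := by omega
    rw [hcsplit] at hy
    linear_combination hy - hqb
  set b' := b - c with hb'def
  have hbc : c + b' = b := by omega
  have hψ0 : ψ 0 = 0 := by
    have h := hψs 0 0
    simpa using h
  have hJ0 : ∃ q : Q, τ ^ c * (0 : S) = ψ q := ⟨0, by rw [mul_zero, hψ0]⟩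
  have hJadd : ∀ x y : S, (∃ q : Q, τ ^ c * x = ψ q) → (∃ q : Q, τ ^ c * y = ψ q) →
      (∃ q : Q, τ ^ c * (x + y) = ψ q) := by
    rintro x y ⟨q1, h1⟩ ⟨q2, h2⟩
    exact ⟨q1 + q2, by rw [hψa, ← h1, ← h2]; ring⟩
  have hJsmul : ∀ (s x : S), (∃ q : Q, τ ^ c * x = ψ q) →
      (∃ q : Q, τ ^ c * (s * x) = ψ q) := by
    rintro s x ⟨q, h⟩
    exact ⟨s • q, by rw [hψs, ← h]; ring⟩
  have hF3 : ∀ s : S, ∃ q : Q, τ ^ c * (τ ^ b' * s) = ψ q := by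
    intro s
    obtain ⟨q, hq⟩ := hb s
    refine ⟨q, ?_⟩
    rw [hq, ← hbc]; ring
  have hF2 : ∃ x₀ : S, (∃ q : Q, τ ^ c * x₀ = ψ q) ∧ ∀ y, x₀ ≠ τ * y := by
    by_contra h
    push_neg at h
    refine hPc1 (fun q => ?_)
    obtain ⟨y, hy⟩ := hPc q
    obtain ⟨w, hw⟩ := h y ⟨q, hy.symm⟩
    exact ⟨w, by rw [hy, hw]; ring⟩
  obtain ⟨x₀, hx₀J, hx₀⟩ := hF2
  obtain ⟨r₀, z₀, hz₀⟩ := hsur x₀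
  have hr₀ : r₀ ≠ 0 := by
    rintro rfl
    rw [map_zero, zero_add] at hz₀
    exact hx₀ z₀ hz₀
  have halgr₀ : algebraMap R S r₀ = x₀ + τ * (-z₀) := by rw [hz₀]; ring
  have claimA : ∀ (i : ℕ) (x : S), ∃ r : R, r ≠ 0 ∧
      ∃ j y : S, (∃ q : Q, τ ^ c * j = ψ q) ∧ algebraMap R S r * x = j + τ ^ i * y := by
    intro i
    induction i with
    | zero =>
      intro x
      exact ⟨1, one_ne_zero, 0, algebraMap R S 1 * x, hJ0, by rw [pow_zero, zero_add, one_mul]⟩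
    | succ i ih =>
      intro x
      obtain ⟨r, hr, j, y, hj, hxy⟩ := ih x
      refine ⟨r₀ * r, mul_ne_zero hr₀ hr,
        algebraMap R S r₀ * j + x₀ * (τ ^ i * y), -z₀ * y, ?_, ?_⟩
      · refine hJadd _ _ (hJsmul _ _ hj) ?_
        obtain ⟨q2, hq2⟩ := hJsmul (τ ^ i * y) x₀ hx₀J
        exact ⟨q2, by rw [← hq2]; ring⟩
      · rw [map_mul, mul_assoc, hxy, halgr₀]; ring
  have hDtor : ∀ x : S, ∃ r : R, r ≠ 0 ∧ ∃ q : Q, τ ^ c * (algebraMap R S r * x) = ψ q := by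
    intro x
    obtain ⟨r, hr, j, y, hj, h⟩ := claimA b' x
    refine ⟨r, hr, ?_⟩
    have h2 := hJadd _ _ hj (hF3 y)
    rwa [← h] at h2
  have hKEY : ∀ x : S, (∃ q : Q, τ ^ c * (τ * x) = ψ q) → ∃ q : Q, τ ^ c * x = ψ q := by
    rintro x ⟨q, hq⟩
    obtain ⟨r, hr, q''2, hq''2⟩ := hDtor x
    have h1 : algebraMap R S r • q = τ • q''2 := by
      apply hψi
      rw [hψs, hψs, ← hq, ← hq''2]; ring
    obtain ⟨q', hq'⟩ := hQtf r q hr ⟨q''2, h1⟩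
    obtain ⟨y, hy⟩ := hPc q'
    have h3 : τ ^ (c + 1) * x = τ ^ (c + 1) * y := by
      calc τ ^ (c + 1) * x = τ ^ c * (τ * x) := by ring
        _ = ψ q := hq
        _ = τ * ψ q' := by rw [hq', hψs]
        _ = τ ^ (c + 1) * y := by rw [hy]; ring
    have hxy := hcan (c + 1) x y h3
    exact ⟨q', by rw [hxy, ← hy]⟩
  have hJ1 : ∃ q : Q, τ ^ c * 1 = ψ q := by
    have haux : ∀ n : ℕ, (∃ q : Q, τ ^ c * τ ^ n = ψ q) → ∃ q : Q, τ ^ c * 1 = ψ q := by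
      intro n
      induction n with
      | zero => intro h; simpa using h
      | succ n ih =>
        intro h
        refine ih (hKEY _ ?_)
        have : τ ^ (n + 1) = τ * τ ^ n := by ring
        rwa [this] at h
    refine haux b' ?_
    have h := hF3 1
    simpa using h
  obtain ⟨q₀, hq₀⟩ := hJ1
  rw [mul_one] at hq₀
  refine ⟨q₀, ?_, ?_⟩
  · intro q
    obtain ⟨y, hy⟩ := hPc q
    have hq : q = y • q₀ := by
      apply hψi
      rw [hψs, ← hq₀, hy]; ring
    obtain ⟨r, z, hz⟩ := hsur y
    refine ⟨r, z • q₀, ?_⟩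
    rw [hq, hz, add_smul, mul_smul]
  · rintro r ⟨q', h⟩
    obtain ⟨y, hy⟩ := hPc q'
    refine hinjR r ⟨y, hcan c _ _ ?_⟩
    have h5 : ψ (algebraMap R S r • q₀) = ψ (τ • q') := by rw [h]
    rw [hψs, hψs, ← hq₀, hy] at h5
    calc τ ^ c * algebraMap R S r = algebraMap R S r * τ ^ c := by ring
      _ = τ * (τ ^ c * y) := h5
      _ = τ ^ c * (τ * y) := by ring

set_option maxHeartbeats 3200000 in
set_option synthInstance.maxHeartbeats 200000 in
/-- **Yoshino, Proposition 3.2.** Let `R` be a commutative noetherian integral domain which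
is a `k`-algebra, and `N` a finitely generated torsion-free `R`-module.  If `R` degenerates
to `N`, then `N ≅ R`. -/
theorem isomorphic_of_degenerates_of_torsionFree
    (k : Type) [Field k] (R : Type) [CommRing R] [IsDomain R] [IsNoetherianRing R]
    [Algebra k R]
    (N : Type) [AddCommGroup N] [Module R N] [Module.Finite R N]
    [NoZeroSMulDivisors R N]
    (hdeg : Degenerates k R R N) :
    Nonempty (N ≃ₗ[R] R) := by
  classical
  obtain ⟨V, _iC, _iD, _iDVR, _iA, t, ht, hres, Q, _iAG, _iM, hQfin, hQflat, hNiso,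
    ξ, hker, hcoker⟩ := hdeg
  -- abbreviations
  set τ : R ⊗[k] V := (1:R) ⊗ₜ[k] t with hτdef
  -- the projection π : V → k
  have halgq : Function.Bijective (Algebra.linearMap k (V ⧸ IsLocalRing.maximalIdeal V)) := hres
  set eqv : k ≃ₗ[k] (V ⧸ IsLocalRing.maximalIdeal V) :=
    LinearEquiv.ofBijective (Algebra.linearMap k (V ⧸ IsLocalRing.maximalIdeal V)) halgq
    with heqv
  set π : V →ₗ[k] k :=
    eqv.symm.toLinearMap.comp (Ideal.Quotient.mkₐ k (IsLocalRing.maximalIdeal V)).toLinearMap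
    with hπ
  have heqva : ∀ c : k, eqv c = algebraMap k (V ⧸ IsLocalRing.maximalIdeal V) c := by
    intro c; simp [heqv, Algebra.linearMap_apply]
  have hπalg : ∀ c : k, π (algebraMap k V c) = c := by
    intro c
    have h1 : (Ideal.Quotient.mkₐ k (IsLocalRing.maximalIdeal V)) (algebraMap k V c)
        = eqv c := by
      rw [AlgHom.commutes, heqva]
    simp [hπ, h1]
    rw [← heqva, LinearEquiv.symm_apply_apply]
  have hπt : ∀ v : V, π (t * v) = 0 := by
    intro v
    have h1 : (Ideal.Quotient.mkₐ k (IsLocalRing.maximalIdeal V)) (t * v) = 0 := by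
      rw [← map_zero (Ideal.Quotient.mkₐ k (IsLocalRing.maximalIdeal V))]
      apply Ideal.Quotient.eq.mpr
      rw [sub_zero]
      exact Ideal.mul_mem_right v _ ((IsLocalRing.mem_maximalIdeal t).mpr
        (mem_nonunits_iff.mpr ht.not_isUnit))
    simp [hπ, h1]
    exact Or.inl (Ideal.Quotient.eq_zero_iff_mem.mpr ((IsLocalRing.mem_maximalIdeal t).mpr
      (mem_nonunits_iff.mpr ht.not_isUnit)))
  have hπ1 : π 1 = 1 := by
    have h := hπalg 1
    rwa [map_one] at h
  have hVdec : ∀ v : V, ∃ w : V, v = algebraMap k V (π v) + t * w := by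
    intro v
    have h3 : eqv (π v) = Ideal.Quotient.mk (IsLocalRing.maximalIdeal V) v := by
      have h4 : π v = eqv.symm (Ideal.Quotient.mk (IsLocalRing.maximalIdeal V) v) := by
        simp [hπ, Ideal.Quotient.mkₐ_eq_mk]
      rw [h4, LinearEquiv.apply_symm_apply]
    have h2 : Ideal.Quotient.mk (IsLocalRing.maximalIdeal V) (algebraMap k V (π v))
        = eqv (π v) := by
      rw [heqva]
      exact (Ideal.Quotient.mkₐ k (IsLocalRing.maximalIdeal V)).commutes (π v)
    have h1 : v - algebraMap k V (π v) ∈ IsLocalRing.maximalIdeal V := by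
      rw [← Ideal.Quotient.eq_zero_iff_mem, map_sub, h2, h3, sub_self]
    rw [ht.maximalIdeal_eq, Ideal.mem_span_singleton'] at h1
    obtain ⟨w, hw⟩ := h1
    exact ⟨w, by linear_combination -hw⟩
  -- the contraction ρ : R ⊗ V → R
  set ρbil : R →ₗ[k] V →ₗ[k] R := LinearMap.mk₂ k (fun r v => π v • r)
    (fun r r' v => smul_add (π v) r r')
    (fun c r v => smul_comm (π v) c r)
    (fun r v v' => by rw [map_add, add_smul])
    (fun c r v => by rw [map_smul, smul_assoc]) with hρbil
  set ρ : R ⊗[k] V →ₗ[k] R := TensorProduct.lift ρbil with hρ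
  have hρtmul : ∀ (r : R) (v : V), ρ (r ⊗ₜ[k] v) = π v • r := by
    intro r v; simp [hρ, hρbil]
  have hρ1 : ∀ r : R, ρ (r ⊗ₜ[k] (1:V)) = r := by
    intro r; rw [hρtmul, hπ1, one_smul]
  have hρτ : ∀ s : R ⊗[k] V, ρ (τ * s) = 0 := by
    intro s
    induction s using TensorProduct.induction_on with
    | zero => rw [mul_zero, map_zero]
    | tmul r v =>
      rw [hτdef, Algebra.TensorProduct.tmul_mul_tmul, one_mul, hρtmul, hπt, zero_smul]
    | add x y hx hy => rw [mul_add, map_add, hx, hy, add_zero]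
  have halg : ∀ r : R, algebraMap R (R ⊗[k] V) r = r ⊗ₜ[k] (1:V) := by
    intro r; simp [Algebra.TensorProduct.algebraMap_apply]
  -- injectivity of R → S/τS
  have hinjS : ∀ r : R, (∃ z : R ⊗[k] V, algebraMap R (R ⊗[k] V) r = τ * z) → r = 0 := by
    rintro r ⟨z, hz⟩
    rw [halg r] at hz
    have h2 := congrArg ρ hz
    rw [hρ1, hρτ] at h2
    exact h2
  -- surjectivity of R → S/τS
  have hsurS : ∀ s : R ⊗[k] V, ∃ (r : R) (z : R ⊗[k] V),
      s = algebraMap R (R ⊗[k] V) r + τ * z := by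
    intro s
    induction s using TensorProduct.induction_on with
    | zero => exact ⟨0, 0, by simp⟩
    | tmul r v =>
      obtain ⟨w, hw⟩ := hVdec v
      refine ⟨π v • r, r ⊗ₜ[k] w, ?_⟩
      rw [halg, hτdef, Algebra.TensorProduct.tmul_mul_tmul, one_mul]
      conv_lhs => rw [hw]
      rw [TensorProduct.tmul_add]
      congr 1
      rw [Algebra.algebraMap_eq_smul_one, TensorProduct.tmul_smul,
        TensorProduct.smul_tmul']
    | add x y hx hy =>
      obtain ⟨r1, z1, h1⟩ := hx
      obtain ⟨r2, z2, h2⟩ := hy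
      exact ⟨r1 + r2, z1 + z2, by rw [h1, h2, map_add]; ring⟩
  -- τ is a nonzerodivisor on S
  have hτS : ∀ s : R ⊗[k] V, τ * s = 0 → s = 0 := by
    have hLinj : Function.Injective (LinearMap.mulLeft k t) := by
      intro a b hab
      simp only [LinearMap.mulLeft_apply] at hab
      exact mul_left_cancel₀ ht.ne_zero hab
    have hlT := Module.Flat.lTensor_preserves_injective_linearMap (M := R)
      (LinearMap.mulLeft k t) hLinj
    have hcomm : ∀ s : R ⊗[k] V, (LinearMap.lTensor R (LinearMap.mulLeft k t)) s = τ * s := by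
      intro s
      induction s using TensorProduct.induction_on with
      | zero => rw [map_zero, mul_zero]
      | tmul r v =>
        rw [LinearMap.lTensor_tmul, LinearMap.mulLeft_apply, hτdef,
          Algebra.TensorProduct.tmul_mul_tmul, one_mul]
      | add x y hx hy => rw [map_add, mul_add, hx, hy]
    intro s hs
    apply hlT
    rw [hcomm, hs, map_zero]
  have hτpowS : ∀ (n : ℕ) (s : R ⊗[k] V), τ ^ n * s = 0 → s = 0 := by
    intro n
    induction n with
    | zero => intro s h; simpa using h
    | succ n ih =>
      intro s h
      have h' : τ ^ n * (τ * s) = 0 := by rw [← h]; ring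
      exact hτS s (ih _ h')
  -- τ is a nonzerodivisor on Q (flatness over V)
  letI instVQ : Module V Q := Module.compHom Q
    (Algebra.TensorProduct.includeRight : V →ₐ[k] R ⊗[k] V).toRingHom
  have hsmulVQ : ∀ (v : V) (q : Q), v • q = (((1:R) ⊗ₜ[k] v : R ⊗[k] V)) • q := by
    intro v q; rfl
  have hQreg : ∀ q : Q, τ • q = 0 → q = 0 := by
    have hL2 : Function.Injective (LinearMap.toSpanSingleton V V t) := by
      intro a b hab
      simp only [LinearMap.toSpanSingleton_apply, smul_eq_mul] at hab
      exact mul_right_cancel₀ ht.ne_zero hab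
    have hlt2 := Module.Flat.lTensor_preserves_injective_linearMap (M := Q)
      (LinearMap.toSpanSingleton V V t) hL2
    intro q hq
    have htq : t • q = 0 := by rw [hsmulVQ, ← hτdef]; exact hq
    have h1 : (LinearMap.toSpanSingleton V V t).lTensor Q (q ⊗ₜ[V] (1:V)) = 0 := by
      rw [LinearMap.lTensor_tmul, LinearMap.toSpanSingleton_apply, one_smul]
      calc (q ⊗ₜ[V] t) = q ⊗ₜ[V] (t • (1:V)) := by rw [smul_eq_mul, mul_one]
        _ = t • (q ⊗ₜ[V] (1:V)) := by rw [TensorProduct.tmul_smul]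
        _ = (t • q) ⊗ₜ[V] (1:V) := by rw [TensorProduct.smul_tmul']
        _ = 0 := by rw [htq, TensorProduct.zero_tmul]
    have h2 : (q ⊗ₜ[V] (1:V)) = 0 := by
      apply hlt2
      rw [h1, map_zero]
    have h3 := congrArg (TensorProduct.rid V Q) h2
    rwa [TensorProduct.rid_tmul, one_smul, map_zero] at h3
  have hQpow : ∀ (n : ℕ) (q : Q), τ ^ n • q = 0 → q = 0 := by
    intro n
    induction n with
    | zero => intro q h; simpa using h
    | succ n ih =>
      intro q h
      have h' : τ ^ n • (τ • q) = 0 := by rw [← mul_smul, ← pow_succ]; exact h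
      exact hQreg q (ih _ h')
  -- the map η : S → Q
  set m0 : (R ⊗[k] V) →ₗ[R ⊗[k] V] ((R ⊗[k] V) ⊗[R] R) :=
    { toFun := fun s => s ⊗ₜ[R] (1:R),
      map_add' := fun a b => TensorProduct.add_tmul a b 1,
      map_smul' := fun s x => (TensorProduct.smul_tmul' s x 1).symm } with hm0
  set η : (R ⊗[k] V) →ₗ[R ⊗[k] V] Q := ξ.comp m0 with hηdef
  have hη : ∀ s : R ⊗[k] V, η s = ξ (s ⊗ₜ[R] 1) := fun s => rfl
  have hrid : ∀ y : (R ⊗[k] V) ⊗[R] R, ((TensorProduct.rid R (R ⊗[k] V)) y) ⊗ₜ[R] (1:R) = y := by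
    intro y
    have h := (TensorProduct.rid R (R ⊗[k] V)).symm_apply_apply y
    rwa [TensorProduct.rid_symm_apply] at h
  have hηinj : Function.Injective η := by
    have h0 : ∀ s, η s = 0 → s = 0 := by
      intro s hs
      rw [hη] at hs
      obtain ⟨n, hn⟩ := hker (s ⊗ₜ[R] 1) (LinearMap.mem_ker.mpr hs)
      have h2 : ((τ ^ n * s) ⊗ₜ[R] (1:R)) = 0 := by
        rw [← smul_eq_mul, ← TensorProduct.smul_tmul']
        exact hn
      have h3 := congrArg (TensorProduct.rid R (R ⊗[k] V)) h2
      rw [TensorProduct.rid_tmul, one_smul, (TensorProduct.rid R (R ⊗[k] V)).map_zero] at h3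
      exact hτpowS n s h3
    intro a b hab
    have h := h0 (a - b) (by rw [map_sub, hab, sub_self])
    exact sub_eq_zero.mp h
  have hcoker' : ∀ q : Q, ∃ n : ℕ, ∃ s, η s = τ ^ n • q := by
    intro q
    obtain ⟨n, hn⟩ := hcoker q
    obtain ⟨y, hy⟩ := hn
    refine ⟨n, (TensorProduct.rid R (R ⊗[k] V)) y, ?_⟩
    rw [hη, hrid, hy]
  -- a uniform power b
  obtain ⟨G, hG⟩ := hQfin.fg_top
  set nfun : Q → ℕ := fun q => (hcoker' q).choose with hnfun
  set b : ℕ := G.sup nfun with hbdef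
  have hb : ∀ q : Q, ∃ s, η s = τ ^ b • q := by
    have hle : (⊤ : Submodule (R ⊗[k] V) Q) ≤
        Submodule.comap ((LinearMap.lsmul (R ⊗[k] V) Q) (τ ^ b)) (LinearMap.range η) := by
      rw [← hG, Submodule.span_le]
      intro g hg
      simp only [SetLike.mem_coe, Submodule.mem_comap, LinearMap.lsmul_apply]
      obtain ⟨s, hs⟩ := (hcoker' g).choose_spec
      have h1 : nfun g ≤ b := Finset.le_sup hg
      have h2 : τ ^ b • g = τ ^ (b - nfun g) • (τ ^ (nfun g) • g) := by
        rw [← mul_smul, ← pow_add]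
        congr 2
        omega
      rw [h2, ← hs]
      exact ⟨τ ^ (b - nfun g) • s, by rw [map_smul]⟩
    intro q
    have h3 := hle (Submodule.mem_top : q ∈ ⊤)
    simpa only [Submodule.mem_comap, LinearMap.lsmul_apply, LinearMap.mem_range] using h3
  -- the map ψ : Q → S
  set ψ : Q → R ⊗[k] V := fun q => (hb q).choose with hψdef
  have hψspec : ∀ q, η (ψ q) = τ ^ b • q := fun q => (hb q).choose_spec
  have hψa : ∀ q q' : Q, ψ (q + q') = ψ q + ψ q' := by
    intro q q'
    apply hηinj
    rw [map_add, hψspec, hψspec, hψspec, smul_add]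
  have hψs : ∀ (s : R ⊗[k] V) (q : Q), ψ (s • q) = s * ψ q := by
    intro s q
    apply hηinj
    rw [hψspec, ← smul_eq_mul, map_smul, hψspec, ← mul_smul, ← mul_smul, mul_comm]
  have hψi : Function.Injective ψ := by
    intro a b' hab
    have h := congrArg η hab
    rw [hψspec, hψspec] at h
    have h2 : τ ^ b • (a - b') = 0 := by rw [smul_sub, h, sub_self]
    exact sub_eq_zero.mp (hQpow b _ h2)
  have hbψ : ∀ s : R ⊗[k] V, ∃ q : Q, ψ q = τ ^ b * s := by
    intro s
    refine ⟨η s, hηinj ?_⟩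
    rw [hψspec, ← smul_eq_mul, map_smul]
  -- span {τ} • ⊤ is the image of multiplication by τ
  have hspan : Ideal.span {τ} • (⊤ : Submodule (R ⊗[k] V) Q)
      = LinearMap.range (LinearMap.lsmul (R ⊗[k] V) Q τ) := by
    apply le_antisymm
    · refine Submodule.smul_le.mpr ?_
      intro r hr q hq
      rw [Ideal.mem_span_singleton] at hr
      obtain ⟨z, rfl⟩ := hr
      exact ⟨z • q, by rw [LinearMap.lsmul_apply, ← mul_smul, mul_comm]⟩
    · rintro x ⟨q, rfl⟩
      exact Submodule.smul_mem_smul (Ideal.subset_span rfl) Submodule.mem_top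
  have hmemτ : ∀ q : Q, q ∈ Ideal.span {τ} • (⊤ : Submodule (R ⊗[k] V) Q) ↔
      ∃ q', q = τ • q' := by
    intro q
    rw [hspan]
    constructor
    · rintro ⟨q', rfl⟩
      exact ⟨q', rfl⟩
    · rintro ⟨q', rfl⟩
      exact ⟨q', rfl⟩
  -- transfer torsion-freeness of N to Q/τQ
  letI instQbar : Module R (Q ⧸ (Ideal.span {τ} • (⊤ : Submodule (R ⊗[k] V) Q))) :=
    Module.compHom _ (algebraMap R (R ⊗[k] V))
  obtain ⟨e⟩ := hNiso
  have hsmulmk : ∀ (r : R) (q : Q),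
      r • (Submodule.Quotient.mk q : Q ⧸ (Ideal.span {τ} • (⊤ : Submodule (R ⊗[k] V) Q)))
        = Submodule.Quotient.mk ((algebraMap R (R ⊗[k] V) r) • q) := by
    intro r q
    rw [Submodule.Quotient.mk_smul]
    rfl
  have hQtf : ∀ (r : R) (q : Q), r ≠ 0 →
      (∃ q', algebraMap R (R ⊗[k] V) r • q = τ • q') → ∃ q', q = τ • q' := by
    rintro r q hr ⟨q', hq'⟩
    rw [← hmemτ]
    have h1 : (Submodule.Quotient.mk ((algebraMap R (R ⊗[k] V) r) • q) :
        Q ⧸ (Ideal.span {τ} • (⊤ : Submodule (R ⊗[k] V) Q))) = 0 := by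
      rw [Submodule.Quotient.mk_eq_zero]
      rw [hq', hmemτ]
      exact ⟨q', rfl⟩
    have h2 : r • (Submodule.Quotient.mk q :
        Q ⧸ (Ideal.span {τ} • (⊤ : Submodule (R ⊗[k] V) Q))) = 0 := by
      rw [hsmulmk, h1]
    have h3 : r • e (Submodule.Quotient.mk q) = 0 := by
      rw [← map_smul, h2, map_zero]
    have h4 : e (Submodule.Quotient.mk q) = 0 := (smul_eq_zero.mp h3).resolve_left hr
    have h5 : (Submodule.Quotient.mk q :
        Q ⧸ (Ideal.span {τ} • (⊤ : Submodule (R ⊗[k] V) Q))) = 0 := by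
      apply e.injective
      rw [h4, map_zero]
    rwa [Submodule.Quotient.mk_eq_zero] at h5
  -- apply the core lemma
  obtain ⟨q₀, hA, hB⟩ := yoshino_core τ hτS hsurS hinjS hQtf ψ hψa hψs hψi b hbψ
  -- build the isomorphism R ≃ Q/τQ
  set θ : R →ₗ[R] (Q ⧸ (Ideal.span {τ} • (⊤ : Submodule (R ⊗[k] V) Q))) :=
    { toFun := fun r => Submodule.Quotient.mk ((algebraMap R (R ⊗[k] V) r) • q₀),
      map_add' := by
        intro a b'
        rw [map_add, add_smul, Submodule.Quotient.mk_add]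
      map_smul' := by
        intro c x
        rw [RingHom.id_apply, smul_eq_mul, map_mul, mul_smul, hsmulmk] } with hθ
  have hθinj : Function.Injective θ := by
    have h0 : ∀ r, θ r = 0 → r = 0 := by
      intro r hr
      have h1 : (algebraMap R (R ⊗[k] V) r) • q₀ ∈
          Ideal.span {τ} • (⊤ : Submodule (R ⊗[k] V) Q) := by
        rw [← Submodule.Quotient.mk_eq_zero]
        exact hr
      rw [hmemτ] at h1
      exact hB r h1
    intro a b' hab
    have h := h0 (a - b') (by rw [map_sub, hab, sub_self])
    exact sub_eq_zero.mp h
  have hθsur : Function.Surjective θ := by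
    intro x
    obtain ⟨q, rfl⟩ := Submodule.Quotient.mk_surjective _ x
    obtain ⟨r, q', hq⟩ := hA q
    refine ⟨r, ?_⟩
    have h0 : (Submodule.Quotient.mk (τ • q') :
        Q ⧸ (Ideal.span {τ} • (⊤ : Submodule (R ⊗[k] V) Q))) = 0 := by
      rw [Submodule.Quotient.mk_eq_zero, hmemτ]
      exact ⟨q', rfl⟩
    show Submodule.Quotient.mk ((algebraMap R (R ⊗[k] V) r) • q₀) = _
    rw [hq, Submodule.Quotient.mk_add, h0, add_zero]
  exact ⟨((LinearEquiv.ofBijective θ ⟨hθinj, hθsur⟩).trans e).symm⟩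


end
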